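/- (Central Sets Theorem, commutative, finitely many sequences) Let (S,+) be an infinite commutative semigroup, A a central subset of S, and for each l ∈ ℕ let ⟨y_{l,n}⟩_{n=1}^∞ be a sequence in S. Then there exist sequences ⟨a_n⟩ in S and ⟨H_n⟩ in 𝒫_f(ℕ) with max H_n < min H_{n+1} for all n, such that for every f : ℕ → ℕ with f(n) ≤ n for all n, all finite sums FS(⟨a_n + Σ_{t∈H_n} y_{f(n),t}⟩_{n=1}^∞) are contained in A. -/

import Mathlib

/-- `A` is thick: every finite nonempty set can be right-translated into `A`. -/
def Thick {S : Type*} [Semigroup S] (A : Set S) : Prop :=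
  ∀ E : Finset S, E.Nonempty → ∃ x : S, ∀ e ∈ E, e * x ∈ A

def Syndetic {S : Type*} [Semigroup S] (A : Set S) : Prop :=
  ∃ F : Finset S, F.Nonempty ∧ ∀ s : S, ∃ t ∈ F, t * s ∈ A

def PiecewiseSyndetic {S : Type*} [Semigroup S] (A : Set S) : Prop :=
  ∃ F : Finset S, F.Nonempty ∧ Thick {s : S | ∃ t ∈ F, t * s ∈ A}

def ThickAdd {S : Type*} [AddSemigroup S] (A : Set S) : Prop :=
  ∀ E : Finset S, E.Nonempty → ∃ x : S, ∀ e ∈ E, e + x ∈ A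

def SyndeticAdd {S : Type*} [AddSemigroup S] (A : Set S) : Prop :=
  ∃ F : Finset S, F.Nonempty ∧ ∀ s : S, ∃ t ∈ F, t + s ∈ A

def PiecewiseSyndeticAdd {S : Type*} [AddSemigroup S] (A : Set S) : Prop :=
  ∃ F : Finset S, F.Nonempty ∧ ThickAdd {s : S | ∃ t ∈ F, t + s ∈ A}

/-- Sum of `f t` over a nonempty finite `H ⊆ ℕ` in a commutative semigroup
(junk value `f 0` when `H = ∅`). -/
def fSum {S : Type*} [AddCommSemigroup S] (H : Finset ℕ) (f : ℕ → S) : S :=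
  match Finset.sort H (· ≤ ·) with
  | [] => f 0
  | a :: l => l.foldl (fun s t => s + f t) (f a)

/-- `J`-set in a commutative semigroup. -/
def JSetAdd {S : Type*} [AddCommSemigroup S] (A : Set S) : Prop :=
  ∀ F : Finset (ℕ → S), F.Nonempty →
    ∃ (a : S) (H : Finset ℕ), H.Nonempty ∧ ∀ f ∈ F, a + fSum H f ∈ A

/-- `x(m,a,t,f) = a(0)·f(t 0)·a(1)·f(t 1)⋯f(t (m-1))·a(m)` (0-indexed version of
`(∏_{j=1}^m a(j)·f(t(j)))·a(m+1)`). -/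
def xNC {S : Type*} [Semigroup S] (m : ℕ) (a : ℕ → S) (t : ℕ → ℕ) (f : ℕ → S) : S :=
  (List.range m).foldl (fun s j => s * f (t j) * a (j + 1)) (a 0)

/-- `J`-set in a not-necessarily-commutative semigroup. -/
def JSetNC {S : Type*} [Semigroup S] (A : Set S) : Prop :=
  ∀ G : Finset (ℕ → S), G.Nonempty →
    ∃ (m : ℕ) (a : ℕ → S) (t : ℕ → ℕ), 1 ≤ m ∧
      (∀ i j : ℕ, i < j → j < m → t i < t j) ∧
      ∀ f ∈ G, xNC m a t f ∈ A

/-- `v 0 + v 1 + ⋯ + v r` in an additive semigroup. -/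
def seqSum {S : Type*} [AddSemigroup S] (v : ℕ → S) (r : ℕ) : S :=
  (List.range r).foldl (fun s j => s + v (j + 1)) (v 0)

/-- `v 0 * v 1 * ⋯ * v r` in a semigroup. -/
def seqProd {S : Type*} [Semigroup S] (v : ℕ → S) (r : ℕ) : S :=
  (List.range r).foldl (fun s j => s * v (j + 1)) (v 0)

/-- Collectionwise piecewise syndetic family (multiplicative). -/
def CollectionwisePS {S : Type*} [Semigroup S] (𝒜 : Set (Set S)) : Prop :=
  ∃ (G : Finset (Set S) → Finset S) (x : Finset (Set S) → Finset S → S),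
    ∀ (F : Finset S) (ℱ ℋ : Finset (Set S)), ℱ.Nonempty → ↑ℋ ⊆ 𝒜 → ℱ ⊆ ℋ →
      ∀ y ∈ F, ∃ t ∈ G ℱ, t * (y * x ℋ F) ∈ ⋂₀ (ℱ : Set (Set S))

/-- Collectionwise piecewise syndetic family (additive). -/
def CollectionwisePSAdd {S : Type*} [AddSemigroup S] (𝒜 : Set (Set S)) : Prop :=
  ∃ (G : Finset (Set S) → Finset S) (x : Finset (Set S) → Finset S → S),
    ∀ (F : Finset S) (ℱ ℋ : Finset (Set S)), ℱ.Nonempty → ↑ℋ ⊆ 𝒜 → ℱ ⊆ ℋ →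
      ∀ y ∈ F, ∃ t ∈ G ℱ, t + (y + x ℋ F) ∈ ⋂₀ (ℱ : Set (Set S))

/-- Central set (multiplicative), via the combinatorial characterization. -/
def Central {S : Type*} [Semigroup S] (A : Set S) : Prop :=
  ∃ (I : Type) (C : I → Set S), Nonempty I ∧
    (∀ N, C N ⊆ A) ∧
    (∀ N M : I, ∃ P : I, C P ⊆ C N ∧ C P ⊆ C M) ∧
    (∀ N : I, ∀ y ∈ C N, ∃ M : I, C M ⊆ {s : S | y * s ∈ C N}) ∧
    CollectionwisePS {B : Set S | ∃ N : I, B = C N}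

/-- Central set (additive), via the combinatorial characterization. -/
def CentralAdd {S : Type*} [AddSemigroup S] (A : Set S) : Prop :=
  ∃ (I : Type) (C : I → Set S), Nonempty I ∧
    (∀ N, C N ⊆ A) ∧
    (∀ N M : I, ∃ P : I, C P ⊆ C N ∧ C P ⊆ C M) ∧
    (∀ N : I, ∀ y ∈ C N, ∃ M : I, C M ⊆ {s : S | y + s ∈ C N}) ∧
    CollectionwisePSAdd {B : Set S | ∃ N : I, B = C N}


/-! ### Auxiliary machinery for the proof -/

open Filter

set_option linter.unusedSectionVars false

attribute [local instance] Ultrafilter.add Ultrafilter.addSemigroup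

namespace CSTPrf

variable {S : Type*} [AddCommSemigroup S]

lemma foldl_coe (f : ℕ → S) (l : List ℕ) (b : S) :
    ((l.foldl (fun s t => s + f t) b : S) : WithZero S)
      = (b : WithZero S) + (l.map (fun t => (f t : WithZero S))).sum := by
  induction l generalizing b with
  | nil => simp
  | cons a l ih =>
      simp only [List.foldl_cons, ih, List.map_cons, List.sum_cons, WithZero.coe_add, add_assoc]

lemma fSum_coe (H : Finset ℕ) (f : ℕ → S) (hH : H.Nonempty) :
    ((fSum H f : S) : WithZero S) = ∑ t ∈ H, (f t : WithZero S) := by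
  have key : ∑ t ∈ H, (f t : WithZero S)
      = ((H.sort (· ≤ ·)).map (fun t => (f t : WithZero S))).sum := by
    rw [Finset.sum_eq_multiset_sum, ← Finset.sort_eq (s := H) (r := (· ≤ ·))]
    rfl
  rw [key]
  unfold fSum
  rcases hs : H.sort (· ≤ ·) with _ | ⟨a, l⟩
  · exfalso
    have := Finset.length_sort (α := ℕ) (· ≤ ·) (s := H)
    rw [hs] at this
    simp at this
    exact hH.ne_empty (Finset.card_eq_zero.mp this.symm)
  · simp [foldl_coe]

lemma coe_injective_wz : Function.Injective ((↑) : S → WithZero S) := fun s t h => by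
  exact_mod_cast h


lemma exists_coe_sum {ι : Type*} (s : Finset ι) (hs : s.Nonempty) (g : ι → S) :
    ∃ b : S, (∑ i ∈ s, (g i : WithZero S)) = (b : WithZero S) := by
  classical
  induction hs using Finset.Nonempty.cons_induction with
  | singleton a => exact ⟨g a, by simp⟩
  | cons a s ha hs ih =>
      obtain ⟨b, hb⟩ := ih
      exact ⟨g a + b, by rw [Finset.sum_cons, hb]; push_cast; rfl⟩

lemma jSetAdd_of_piecewiseSyndeticAdd {A : Set S} (h : PiecewiseSyndeticAdd A) :
    JSetAdd A := by
  classical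
  obtain ⟨Y, hYne, hT⟩ := h
  intro F hF
  set T : Set S := {s : S | ∃ t ∈ Y, t + s ∈ A} with hTdef
  haveI hαne : Nonempty {f // f ∈ F} := ⟨⟨hF.choose, hF.choose_spec⟩⟩
  haveI hκne : Nonempty {t // t ∈ Y} := ⟨⟨hYne.choose, hYne.choose_spec⟩⟩
  obtain ⟨ι, ιfin, hHJ⟩ :=
    Combinatorics.Line.exists_mono_in_high_dimension {f // f ∈ F} {t // t ∈ Y}
  -- ι is nonempty
  haveI hιne : Nonempty ι := by
    obtain ⟨l, -⟩ := hHJ (fun _ => Classical.arbitrary _)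
    obtain ⟨i, -⟩ := l.proper
    exact ⟨i⟩
  let e : ι → ℕ := fun i => (Fintype.equivFin ι i : ℕ)
  have he : Function.Injective e := fun i j hij =>
    (Fintype.equivFin ι).injective (Fin.val_injective hij)
  let vZ : (ι → {f // f ∈ F}) → WithZero S := fun w => ∑ i, ((w i).1 (e i) : WithZero S)
  have hv : ∀ w, ∃ b : S, vZ w = (b : WithZero S) := fun w =>
    exists_coe_sum Finset.univ Finset.univ_nonempty _
  let v : (ι → {f // f ∈ F}) → S := fun w => (hv w).choose
  have hvspec : ∀ w, vZ w = ((v w : S) : WithZero S) := fun w => (hv w).choose_spec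
  -- thickness
  obtain ⟨x, hx⟩ := hT (Finset.image v Finset.univ)
    (Finset.image_nonempty.mpr Finset.univ_nonempty)
  have hx' : ∀ w, ∃ t ∈ Y, t + (v w + x) ∈ A := fun w =>
    hx (v w) (Finset.mem_image_of_mem v (Finset.mem_univ w))
  let C : (ι → {f // f ∈ F}) → {t // t ∈ Y} := fun w =>
    ⟨(hx' w).choose, (hx' w).choose_spec.1⟩
  obtain ⟨l, t0, hl⟩ := hHJ C
  -- variable and constant positions
  let H : Finset ℕ := (Finset.univ.filter (fun i => l.idxFun i = none)).image e
  have hHne : H.Nonempty := by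
    obtain ⟨i, hi⟩ := l.proper
    exact ⟨e i, Finset.mem_image_of_mem e (Finset.mem_filter.mpr ⟨Finset.mem_univ i, hi⟩)⟩
  let f₀ : {f // f ∈ F} := Classical.arbitrary _
  let c : ι → S := fun i => ((l.idxFun i).getD f₀).1 (e i)
  let Hc : Finset ι := Finset.univ.filter (fun i => ¬ l.idxFun i = none)
  let cZ : WithZero S := ∑ i ∈ Hc, (c i : WithZero S)
  -- decomposition of vZ along the line
  have hdec : ∀ fa : {f // f ∈ F},
      vZ (l fa) = (∑ t ∈ H, ((fa.1 t : S) : WithZero S)) + cZ := by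
    intro fa
    have split := Finset.sum_filter_add_sum_filter_not Finset.univ
      (fun i => l.idxFun i = none) (fun i => (((l fa i).1 (e i) : S) : WithZero S))
    have h1 : ∑ i ∈ Finset.univ.filter (fun i => l.idxFun i = none),
        (((l fa i).1 (e i) : S) : WithZero S) = ∑ t ∈ H, ((fa.1 t : S) : WithZero S) := by
      rw [Finset.sum_image (fun i _ j _ hij => he hij)]
      apply Finset.sum_congr rfl
      intro i hi
      have hnone : l.idxFun i = none := (Finset.mem_filter.mp hi).2
      have : l fa i = fa := by
        show (l.idxFun i).getD fa = fa
        rw [hnone]; rfl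
      rw [this]
    have h2 : ∑ i ∈ Finset.univ.filter (fun i => ¬ l.idxFun i = none),
        (((l fa i).1 (e i) : S) : WithZero S) = cZ := by
      apply Finset.sum_congr rfl
      intro i hi
      have hsome : ¬ l.idxFun i = none := (Finset.mem_filter.mp hi).2
      obtain ⟨g, hg⟩ := Option.ne_none_iff_exists'.mp hsome
      have h3 : l fa i = g := by
        show (l.idxFun i).getD fa = g
        rw [hg]; rfl
      have h4 : c i = g.1 (e i) := by
        show ((l.idxFun i).getD f₀).1 (e i) = g.1 (e i)
        rw [hg]
        rfl
      rw [h3, h4]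
    rw [← h1, ← h2]
    exact split.symm
  -- produce a : S with ↑a = ↑t0.1 + (cZ + ↑x)
  have hexa : ∃ a : S, ((a : S) : WithZero S) = ((t0.1 : S) : WithZero S) + (cZ + (x : WithZero S)) := by
    rcases Hc.eq_empty_or_nonempty with hHc | hHc
    · refine ⟨t0.1 + x, ?_⟩
      have : cZ = 0 := by simp [cZ, hHc]
      rw [this, zero_add]; push_cast; rfl
    · obtain ⟨b, hb⟩ := exists_coe_sum Hc hHc c
      refine ⟨t0.1 + (b + x), ?_⟩
      show _ = _
      rw [show cZ = ((b : S) : WithZero S) from hb]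
      push_cast; rfl
  obtain ⟨a, ha⟩ := hexa
  refine ⟨a, H, hHne, ?_⟩
  intro f hf
  set fa : {f // f ∈ F} := ⟨f, hf⟩ with hfa
  -- the color of l fa is t0, giving membership
  have hmem : (C (l fa)).1 + (v (l fa) + x) ∈ A := (hx' (l fa)).choose_spec.2
  rw [hl fa] at hmem
  -- identify a + fSum H f with t0.1 + (v (l fa) + x)
  have hkey : a + fSum H f = t0.1 + (v (l fa) + x) := by
    have hinj : Function.Injective ((↑) : S → WithZero S) := fun s t h => by
      exact_mod_cast h
    apply hinj
    push_cast
    rw [fSum_coe H f hHne, ha, ← hvspec (l fa), hdec fa]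
    push_cast
    abel
  rw [hkey]
  exact hmem

lemma jSetAdd_translate {B : Set S} (y : S) (h : JSetAdd {z | y + z ∈ B}) : JSetAdd B := by
  intro F hF
  obtain ⟨a, H, hne, hmem⟩ := h F hF
  exact ⟨y + a, H, hne, fun f hf => by rw [add_assoc]; exact hmem f hf⟩

lemma ufMemAdd (U V : Ultrafilter S) (A : Set S) :
    A ∈ U + V ↔ {m | {m' | m + m' ∈ A} ∈ V} ∈ U := Iff.rfl

lemma ufMemPureAdd (e : S) (p : Ultrafilter S) (A : Set S) :
    A ∈ (pure e : Ultrafilter S) + p ↔ {m' | e + m' ∈ A} ∈ p := by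
  rw [ufMemAdd]; exact Ultrafilter.mem_pure

/-- there is a minimal closed left ideal inside any closed left ideal. -/
lemma exists_minimal_left_ideal [Nonempty S] (R₀ : Set (Ultrafilter S))
    (hR₀ne : R₀.Nonempty) (hR₀cl : IsClosed R₀)
    (hR₀id : ∀ p q : Ultrafilter S, q ∈ R₀ → p + q ∈ R₀) :
    ∃ L : Set (Ultrafilter S), L ⊆ R₀ ∧ L.Nonempty ∧ IsClosed L ∧
      (∀ p q : Ultrafilter S, q ∈ L → p + q ∈ L) ∧
      (∀ q ∈ L, ∀ p ∈ L, ∃ r : Ultrafilter S, r + q = p) := by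
  let 𝒮 : Set (Set (Ultrafilter S)) :=
    {L | L.Nonempty ∧ IsClosed L ∧ ∀ p q : Ultrafilter S, q ∈ L → p + q ∈ L}
  obtain ⟨L, hLR₀, hL⟩ : ∃ L, L ⊆ R₀ ∧ Minimal (· ∈ 𝒮) L := by
    apply zorn_superset_nonempty
    · intro c hcs hc hcne
      refine ⟨⋂₀ c, ⟨?_, isClosed_sInter fun t ht => (hcs ht).2.1, fun p q hq => ?_⟩,
        fun s hs => Set.sInter_subset_of_mem hs⟩
      · haveI := hcne.coe_sort
        have := IsCompact.nonempty_iInter_of_directed_nonempty_isCompact_isClosed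
          (fun (t : c) => (t : Set (Ultrafilter S)))
          (DirectedOn.directed_val (IsChain.directedOn hc.symm))
          (fun t => (hcs t.2).1) (fun t => (hcs t.2).2.1.isCompact) (fun t => (hcs t.2).2.1)
        rwa [Set.sInter_eq_iInter]
      · rw [Set.mem_sInter] at hq ⊢
        exact fun t ht => (hcs ht).2.2 p q (hq t ht)
    · exact ⟨hR₀ne, hR₀cl, hR₀id⟩
  obtain ⟨⟨hLne, hLcl, hLid⟩, hmin⟩ := hL
  refine ⟨L, hLR₀, hLne, hLcl, hLid, fun q hq p hp => ?_⟩
  have hR : Set.range (· + q) ∈ 𝒮 := by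
    refine ⟨⟨q + q, ⟨q, rfl⟩⟩, ?_, ?_⟩
    · exact (isCompact_range (Ultrafilter.continuous_add_left q)).isClosed
    · rintro p' _ ⟨r, rfl⟩
      exact ⟨p' + r, add_assoc p' r q⟩
  have hsub : Set.range (· + q) ⊆ L := by rintro _ ⟨r, rfl⟩; exact hLid r q hq
  exact hmin hR hsub hp

/-- members of ultrafilters in a minimal closed left ideal are piecewise syndetic. -/
lemma ps_of_mem_minimal [Nonempty S] {L : Set (Ultrafilter S)}
    (hLne : L.Nonempty) (hLcl : IsClosed L)
    (hLid : ∀ p q : Ultrafilter S, q ∈ L → p + q ∈ L)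
    (hLmin : ∀ q ∈ L, ∀ p ∈ L, ∃ r : Ultrafilter S, r + q = p)
    {p : Ultrafilter S} (hp : p ∈ L) {A : Set S} (hA : A ∈ p) :
    PiecewiseSyndeticAdd A := by
  -- every q ∈ L admits y with {m' | y + m' ∈ A} ∈ q
  have cover : L ⊆ ⋃ y : S, {q : Ultrafilter S | {m' | y + m' ∈ A} ∈ q} := by
    intro q hq
    obtain ⟨r, hr⟩ := hLmin q hq p hp
    have : A ∈ r + q := hr.symm ▸ hA
    rw [ufMemAdd] at this
    obtain ⟨y, hy⟩ := Ultrafilter.nonempty_of_mem this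
    exact Set.mem_iUnion.mpr ⟨y, hy⟩
  obtain ⟨Y, hY⟩ := (hLcl.isCompact).elim_finite_subcover
    (fun y : S => {q : Ultrafilter S | {m' | y + m' ∈ A} ∈ q})
    (fun y => ultrafilter_isOpen_basic _) cover
  have hYne : Y.Nonempty := by
    obtain ⟨q0, hq0⟩ := hLne
    obtain ⟨y, hy, _⟩ := Set.mem_iUnion₂.mp (hY hq0)
    exact ⟨y, hy⟩
  refine ⟨Y, hYne, ?_⟩
  intro E hE
  have key : ∀ e : S, {m' | e + m' ∈ {s | ∃ t ∈ Y, t + s ∈ A}} ∈ p := by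
    intro e
    have hep : (pure e : Ultrafilter S) + p ∈ L := hLid _ _ hp
    obtain ⟨y, hy, hmem⟩ := Set.mem_iUnion₂.mp (hY hep)
    rw [Set.mem_setOf_eq, ufMemPureAdd] at hmem
    refine Filter.mem_of_superset hmem ?_
    intro m' hm'
    rw [Set.mem_setOf_eq] at hm'
    exact ⟨y, hy, hm'⟩
  have : (⋂ e ∈ E, {m' | e + m' ∈ {s | ∃ t ∈ Y, t + s ∈ A}}) ∈ p := by
    exact (Filter.biInter_mem E.finite_toSet).mpr fun e _ => key e
  obtain ⟨x, hx⟩ := Ultrafilter.nonempty_of_mem this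
  exact ⟨x, fun e he => by simpa using (Set.mem_iInter₂.mp hx e he)⟩

/-- From `CentralAdd` obtain an idempotent ultrafilter containing `A`
all of whose members are `J`-sets. -/
lemma exists_good_idempotent [Nonempty S] {A : Set S} (hA : CentralAdd A) :
    ∃ p : Ultrafilter S, p + p = p ∧ A ∈ p ∧ ∀ B ∈ p, JSetAdd B := by
  classical
  obtain ⟨I, Cc, ⟨N₀⟩, hCA, hdir, htrans, G, xx, hGx⟩ := hA
  set 𝒜 : Set (Set S) := {B : Set S | ∃ N : I, B = Cc N} with h𝒜
  -- the sets E ℱ F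
  set E : Finset (Set S) → Finset S → Set S :=
    fun ℱ F => {z | ∀ y ∈ F, ∃ t ∈ G ℱ, t + (y + z) ∈ ⋂₀ (ℱ : Set (Set S))} with hE
  set 𝒢 : Set (Set S) :=
    {B | ∃ ℱ : Finset (Set S), ∃ F : Finset S, ℱ.Nonempty ∧ ↑ℱ ⊆ 𝒜 ∧ B = E ℱ F} with h𝒢
  -- an ultrafilter q₀ containing all members of 𝒢
  obtain ⟨q₀, hq₀⟩ : ∃ q₀ : Ultrafilter S, 𝒢 ⊆ q₀.sets := by
    apply Ultrafilter.exists_ultrafilter_of_finite_inter_nonempty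
    intro T hT
    let rep : {B // B ∈ T} → Finset (Set S) × Finset S := fun B =>
      ⟨(hT B.2).choose, (hT B.2).choose_spec.choose⟩
    let ℋ : Finset (Set S) := T.attach.sup (fun B => (rep B).1)
    let F : Finset S := T.attach.sup (fun B => (rep B).2)
    have hℋ𝒜 : ↑ℋ ⊆ 𝒜 := by
      intro B hB
      rw [Finset.mem_coe, Finset.mem_sup] at hB
      obtain ⟨C', _, hC'⟩ := hB
      exact (hT C'.2).choose_spec.choose_spec.2.1 hC'
    refine ⟨xx ℋ F, ?_⟩
    rw [Set.mem_sInter]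
    intro B hB
    rw [Finset.mem_coe] at hB
    obtain ⟨hne, hsub, hBE⟩ := (hT hB).choose_spec.choose_spec
    rw [hBE]
    intro y hy
    exact hGx F (hT hB).choose ℋ hne hℋ𝒜
      (Finset.le_sup (f := fun B => (rep B).1) (T.mem_attach ⟨B, hB⟩)) y
      (Finset.le_sup (f := fun B => (rep B).2) (T.mem_attach ⟨B, hB⟩) hy)
  -- translates of members of 𝒢 are in q₀ as well
  have hq₀' : ∀ (ℱ : Finset (Set S)) (F : Finset S), ℱ.Nonempty → ↑ℱ ⊆ 𝒜 →
      ∀ m : S, {m' | m + m' ∈ E ℱ F} ∈ q₀ := by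
    intro ℱ F hne hsub m
    have h1 : E ℱ (F.image (· + m)) ∈ q₀ := hq₀ ⟨ℱ, F.image (· + m), hne, hsub, rfl⟩
    refine Filter.mem_of_superset h1 ?_
    intro z hz y hy
    have := hz (y + m) (Finset.mem_image_of_mem _ hy)
    obtain ⟨t, ht, htt⟩ := this
    exact ⟨t, ht, by rwa [add_assoc] at htt⟩
  -- the closed left ideal generated by q₀, and a minimal one inside it
  obtain ⟨L, hLR₀, hLne, hLcl, hLid, hLmin⟩ := exists_minimal_left_ideal
    (Set.range (· + q₀)) ⟨q₀ + q₀, ⟨q₀, rfl⟩⟩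
    (isCompact_range (Ultrafilter.continuous_add_left q₀)).isClosed
    (by rintro p' _ ⟨r, rfl⟩; exact ⟨p' + r, add_assoc p' r q₀⟩)
  -- every member of L contains every E ℱ F
  have hLE : ∀ u ∈ L, ∀ (ℱ : Finset (Set S)) (F : Finset S), ℱ.Nonempty → ↑ℱ ⊆ 𝒜 →
      E ℱ F ∈ u := by
    intro u hu ℱ F hne hsub
    obtain ⟨r, rfl⟩ := hLR₀ hu
    rw [ufMemAdd]
    exact Filter.univ_mem' (fun m => hq₀' ℱ F hne hsub m)
  -- for each good ℱ there is p ∈ L with ⋂₀ ℱ ∈ p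
  have hmain : ∀ ℱ : Finset (Set S), ℱ.Nonempty → ↑ℱ ⊆ 𝒜 →
      ∃ p ∈ L, ⋂₀ (ℱ : Set (Set S)) ∈ p := by
    intro ℱ hne hsub
    obtain ⟨u, hu⟩ := hLne
    have s₀ : S := Classical.arbitrary S
    have hu' : (pure s₀ : Ultrafilter S) + u ∈ L := hLid _ _ hu
    have hB : {z | ∃ t ∈ G ℱ, t + z ∈ ⋂₀ (ℱ : Set (Set S))} ∈ (pure s₀ : Ultrafilter S) + u := by
      rw [ufMemPureAdd]
      have := hLE u hu ℱ {s₀} hne hsub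
      refine Filter.mem_of_superset this ?_
      intro z hz
      exact hz s₀ (Finset.mem_singleton_self s₀)
    have hB' : (⋃ t ∈ (G ℱ : Set S), {z | t + z ∈ ⋂₀ (ℱ : Set (Set S))}) ∈
        (pure s₀ : Ultrafilter S) + u := by
      refine Filter.mem_of_superset hB ?_
      rintro z ⟨t, ht, htz⟩
      exact Set.mem_biUnion ht htz
    rw [Ultrafilter.finite_biUnion_mem_iff (G ℱ).finite_toSet] at hB'
    obtain ⟨t, ht, htm⟩ := hB'
    refine ⟨(pure t : Ultrafilter S) + ((pure s₀ : Ultrafilter S) + u), hLid _ _ hu', ?_⟩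
    rw [ufMemPureAdd]
    exact htm
  -- compactness: get p ∈ L with all Cc N ∈ p
  have hfip : (L ∩ ⋂ N : I, {p : Ultrafilter S | Cc N ∈ p}).Nonempty := by
    apply hLcl.isCompact.inter_iInter_nonempty
    · intro N; exact ultrafilter_isClosed_basic _
    · intro t
      rcases t.eq_empty_or_nonempty with rfl | htne
      · simpa using hLne
      · obtain ⟨p, hpL, hp⟩ := hmain (t.image Cc) (htne.image Cc)
          (by intro B hB; rw [Finset.coe_image] at hB
              obtain ⟨N, _, rfl⟩ := hB; exact ⟨N, rfl⟩)
        refine ⟨p, hpL, ?_⟩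
        rw [Set.mem_iInter₂]
        intro N hN
        exact Filter.mem_of_superset hp
          (Set.sInter_subset_of_mem (by rw [Finset.coe_image]; exact ⟨N, hN, rfl⟩))
  obtain ⟨phat, hphatL, hphatC⟩ := hfip
  rw [Set.mem_iInter] at hphatC
  -- phat has all members J-sets
  have hphatJ : ∀ B ∈ phat, JSetAdd B := fun B hB =>
    jSetAdd_of_piecewiseSyndeticAdd (ps_of_mem_minimal hLne hLcl hLid hLmin hphatL hB)
  -- the compact subsemigroup
  set T : Set (Ultrafilter S) :=
    {q | ∀ N : I, Cc N ∈ q} ∩ {q | ∀ B ∈ q, JSetAdd B} with hT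
  have hTne : T.Nonempty := ⟨phat, fun N => hphatC N, hphatJ⟩
  have hTcl : IsClosed T := by
    apply IsClosed.inter
    · have : {q : Ultrafilter S | ∀ N : I, Cc N ∈ q} = ⋂ N : I, {q | Cc N ∈ q} := by
        ext q; simp
      rw [this]
      exact isClosed_iInter fun N => ultrafilter_isClosed_basic _
    · have : {q : Ultrafilter S | ∀ B ∈ q, JSetAdd B}
          = ⋂ (B : Set S) (_ : ¬ JSetAdd B), {q | B ∈ q}ᶜ := by
        ext q
        simp only [Set.mem_iInter, Set.mem_setOf_eq, Set.mem_compl_iff]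
        constructor
        · intro h B hB hBq; exact hB (h B hBq)
        · intro h B hBq; by_contra hB; exact h B hB hBq
      rw [this]
      exact isClosed_iInter fun B => isClosed_iInter fun _ =>
        (ultrafilter_isOpen_basic _).isClosed_compl
  have hTsemi : ∀ q₁ ∈ T, ∀ q₂ ∈ T, q₁ + q₂ ∈ T := by
    rintro q₁ ⟨hC₁, hJ₁⟩ q₂ ⟨hC₂, hJ₂⟩
    constructor
    · intro N
      rw [ufMemAdd]
      refine Filter.mem_of_superset (hC₁ N) ?_
      intro y hy
      obtain ⟨M, hM⟩ := htrans N y hy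
      exact Filter.mem_of_superset (hC₂ M) hM
    · intro B hB
      rw [ufMemAdd] at hB
      obtain ⟨y, hy⟩ := Ultrafilter.nonempty_of_mem hB
      exact jSetAdd_translate y (hJ₂ _ hy)
  obtain ⟨p, hpT, hpidem⟩ := exists_idempotent_in_compact_add_subsemigroup
    Ultrafilter.continuous_add_left T hTne hTcl.isCompact hTsemi
  exact ⟨p, hpidem, Filter.mem_of_superset (hpT.1 N₀) (hCA N₀), hpT.2⟩

section Main

variable (p : Ultrafilter S) (A : Set S) (y : ℕ → ℕ → S)

def GoodSet (B : Set S) : Prop :=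
  B ∈ p ∧ B ⊆ A ∧ ∀ s ∈ B, {z | s + z ∈ B} ∈ p

lemma good_star (hidem : p + p = p) (hA : A ∈ p) :
    GoodSet p A {x ∈ A | {z | x + z ∈ A} ∈ p} := by
  have hmem : {x ∈ A | {z | x + z ∈ A} ∈ p} ∈ p := by
    have h1 : {x : S | {z | x + z ∈ A} ∈ p} ∈ p := by
      have : A ∈ p + p := hidem.symm ▸ hA
      rw [ufMemAdd] at this
      exact this
    exact Filter.inter_mem hA h1
  refine ⟨hmem, Set.sep_subset _ _, ?_⟩
  rintro x ⟨hxA, hxp⟩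
  have h2 : {z : S | {w | z + w ∈ {z | x + z ∈ A}} ∈ p} ∈ p := by
    have : {z | x + z ∈ A} ∈ p + p := hidem.symm ▸ hxp
    rw [ufMemAdd] at this
    exact this
  have h3 : {z | x + z ∈ A} ∩ {z : S | {w | z + w ∈ {z | x + z ∈ A}} ∈ p}
      ⊆ {z | x + z ∈ {x ∈ A | {z | x + z ∈ A} ∈ p}} := by
    rintro z ⟨hz1, hz2⟩
    refine ⟨hz1, ?_⟩
    have heq : {w | z + w ∈ {z | x + z ∈ A}} = {w | (x + z) + w ∈ A} := by
      ext w; simp only [Set.mem_setOf_eq]; rw [add_assoc]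
    have hz2' : {w | z + w ∈ {z | x + z ∈ A}} ∈ p := hz2
    rwa [heq] at hz2'
  exact Filter.mem_of_superset (Filter.inter_mem hxp h2) h3

lemma good_next {B : Set S} (hG : GoodSet p A B) (n : ℕ) (v : ℕ → S)
    (hv : ∀ l, l ≤ n → v l ∈ B) :
    GoodSet p A (B ∩ ⋂ l ∈ Finset.range (n+1), {z | v l + z ∈ B}) := by
  obtain ⟨hBp, hBA, hBstar⟩ := hG
  have hmem : (B ∩ ⋂ l ∈ Finset.range (n+1), {z | v l + z ∈ B}) ∈ p := by
    refine Filter.inter_mem hBp ?_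
    refine (Filter.biInter_mem (Finset.range (n+1)).finite_toSet).mpr ?_
    intro l hl
    exact hBstar (v l) (hv l (Nat.lt_succ_iff.mp (Finset.mem_range.mp hl)))
  refine ⟨hmem, fun x hx => hBA hx.1, ?_⟩
  rintro x ⟨hxB, hxI⟩
  rw [Set.mem_iInter₂] at hxI
  have hsub : {z | x + z ∈ B} ∩ ⋂ l ∈ Finset.range (n+1), {z | (v l + x) + z ∈ B}
      ⊆ {z | x + z ∈ B ∩ ⋂ l ∈ Finset.range (n+1), {z | v l + z ∈ B}} := by
    rintro z ⟨hz1, hz2⟩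
    rw [Set.mem_iInter₂] at hz2
    refine ⟨hz1, ?_⟩
    rw [Set.mem_iInter₂]
    intro l hl
    have := hz2 l hl
    rwa [Set.mem_setOf_eq, add_assoc] at this
  refine Filter.mem_of_superset (Filter.inter_mem (hBstar x hxB) ?_) hsub
  refine (Filter.biInter_mem (Finset.range (n+1)).finite_toSet).mpr ?_
  intro l hl
  exact hBstar (v l + x) (hxI l hl)

lemma step_ex (hJ : ∀ B ∈ p, JSetAdd B) {B : Set S} (hB : B ∈ p) (n m : ℕ) :
    ∃ aH : S × Finset ℕ, aH.2.Nonempty ∧ (∀ t ∈ aH.2, m < t) ∧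
      ∀ l, l ≤ n → aH.1 + fSum aH.2 (y l) ∈ B := by
  classical
  obtain ⟨a, H0, hne, hmem⟩ := hJ B hB
    ((Finset.range (n+1)).image (fun l => fun t => y l (t + (m+1))))
    (Finset.image_nonempty.mpr Finset.nonempty_range_add_one)
  refine ⟨(a, H0.image (· + (m+1))), Finset.image_nonempty.mpr hne, ?_, ?_⟩
  · intro t ht
    obtain ⟨t0, _, rfl⟩ := Finset.mem_image.mp ht
    omega
  · intro l hl
    have hfun : (fun t => y l (t + (m+1))) ∈
        (Finset.range (n+1)).image (fun l => fun t => y l (t + (m+1))) :=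
      Finset.mem_image_of_mem _ (Finset.mem_range.mpr (Nat.lt_succ_of_le hl))
    have h1 := hmem _ hfun
    have h2 : fSum (H0.image (· + (m+1))) (y l) = fSum H0 (fun t => y l (t + (m+1))) := by
      apply coe_injective_wz
      rw [fSum_coe _ _ (Finset.image_nonempty.mpr hne), fSum_coe _ _ hne,
        Finset.sum_image (fun a _ b _ h => by omega)]
    rwa [h2]

noncomputable def chain (hidem : p + p = p) (hJ : ∀ B ∈ p, JSetAdd B) (hA : A ∈ p) :
    ℕ → {Bm : Set S × ℕ // GoodSet p A Bm.1}
  | 0 => ⟨({x ∈ A | {z | x + z ∈ A} ∈ p}, 0), good_star p A hidem hA⟩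
  | n+1 =>
    let c := chain hidem hJ hA n
    let s := step_ex p y hJ c.2.1 n c.1.2
    let aH := s.choose
    ⟨(c.1.1 ∩ ⋂ l ∈ Finset.range (n+1),
        {z | (aH.1 + fSum aH.2 (y l)) + z ∈ c.1.1}, aH.2.sup id),
      good_next p A c.2 n (fun l => aH.1 + fSum aH.2 (y l))
        (fun l hl => s.choose_spec.2.2 l hl)⟩

end Main

section Main2

lemma fSum_singleton (g : ℕ → S) (t : ℕ) : fSum {t} g = g t := by
  apply coe_injective_wz
  rw [fSum_coe _ _ (Finset.singleton_nonempty t), Finset.sum_singleton]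

lemma fSum_min_split (g : ℕ → S) (F : Finset ℕ) (hF : F.Nonempty)
    (hF' : (F.erase (F.min' hF)).Nonempty) :
    fSum F g = g (F.min' hF) + fSum (F.erase (F.min' hF)) g := by
  apply coe_injective_wz
  rw [WithZero.coe_add, fSum_coe _ _ hF, fSum_coe _ _ hF']
  exact (Finset.add_sum_erase F (fun t => ((g t : S) : WithZero S)) (F.min'_mem hF)).symm

lemma mainInduction (p : Ultrafilter S) (A : Set S) (y : ℕ → ℕ → S)
    (hidem : p + p = p) (hJ : ∀ B ∈ p, JSetAdd B) (hA : A ∈ p) :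
    ∃ (a : ℕ → S) (H : ℕ → Finset ℕ),
      (∀ n : ℕ, (H n).Nonempty) ∧
      (∀ n : ℕ, ∀ s ∈ H n, ∀ u ∈ H (n + 1), s < u) ∧
      ∀ f : ℕ → ℕ, (∀ n, f n ≤ n) →
        ∀ F : Finset ℕ, F.Nonempty →
          fSum F (fun n => a n + fSum (H n) (y (f n))) ∈ A := by
  classical
  set c : ℕ → {Bm : Set S × ℕ // GoodSet p A Bm.1} := chain p A y hidem hJ hA with hc
  set sEx : ∀ n : ℕ, ∃ aH : S × Finset ℕ, aH.2.Nonempty ∧ (∀ t ∈ aH.2, (c n).1.2 < t) ∧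
      ∀ l, l ≤ n → aH.1 + fSum aH.2 (y l) ∈ (c n).1.1 :=
    fun n => step_ex p y hJ (c n).2.1 n (c n).1.2 with hsEx
  set a : ℕ → S := fun n => (sEx n).choose.1 with ha
  set H : ℕ → Finset ℕ := fun n => (sEx n).choose.2 with hH
  set v : ℕ → ℕ → S := fun n l => a n + fSum (H n) (y l) with hv
  have chain_succ_B : ∀ n, (c (n+1)).1.1 = (c n).1.1 ∩
      ⋂ l ∈ Finset.range (n+1), {z | v n l + z ∈ (c n).1.1} := fun n => rfl
  have chain_succ_m : ∀ n, (c (n+1)).1.2 = (H n).sup id := fun n => rfl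
  have F1 : ∀ n, (H n).Nonempty := fun n => (sEx n).choose_spec.1
  have F2 : ∀ n, ∀ t ∈ H n, (c n).1.2 < t := fun n => (sEx n).choose_spec.2.1
  have F3 : ∀ n, ∀ l, l ≤ n → v n l ∈ (c n).1.1 := fun n => (sEx n).choose_spec.2.2
  have F4 : ∀ n, (c (n+1)).1.1 ⊆ (c n).1.1 := by
    intro n
    rw [chain_succ_B n]
    exact Set.inter_subset_left
  have F5 : ∀ n, ∀ l, l ≤ n → (c (n+1)).1.1 ⊆ {z | v n l + z ∈ (c n).1.1} := by
    intro n l hl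
    rw [chain_succ_B n]
    intro z hz
    exact (Set.mem_iInter₂.mp hz.2) l (Finset.mem_range.mpr (Nat.lt_succ_of_le hl))
  have F7 : ∀ j k, j ≤ k → (c k).1.1 ⊆ (c j).1.1 := by
    intro j k hjk
    induction k with
    | zero => rw [Nat.le_zero.mp hjk]
    | succ k ih =>
        by_cases hj : j = k + 1
        · subst hj; exact fun x hx => hx
        · have hjk' : j ≤ k := by omega
          exact (F4 k).trans (ih hjk')
  refine ⟨a, H, F1, ?_, ?_⟩
  · intro n s hs u hu
    have h1 : s ≤ (c (n+1)).1.2 := by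
      rw [chain_succ_m n]
      exact Finset.le_sup (f := id) hs
    exact lt_of_le_of_lt h1 (F2 (n+1) u hu)
  · intro f hf F hF
    -- key claim by strong induction
    have key : ∀ F : Finset ℕ, ∀ hF : F.Nonempty,
        fSum F (fun n => v n (f n)) ∈ (c (F.min' hF)).1.1 := by
      intro F
      induction F using Finset.strongInduction with
      | _ F ih =>
        intro hF
        set m₀ := F.min' hF with hm₀
        rcases (F.erase m₀).eq_empty_or_nonempty with he | he
        · have hFeq : F = {m₀} := by
            apply Finset.eq_singleton_iff_unique_mem.mpr
            refine ⟨F.min'_mem hF, fun x hx => ?_⟩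
            by_contra hne
            have hmem : x ∈ F.erase m₀ := Finset.mem_erase.mpr ⟨hne, hx⟩
            rw [he] at hmem
            simp at hmem
          rw [hFeq, fSum_singleton]
          have := F3 m₀ (f m₀) (hf m₀)
          simpa using this
        · have herase : F.erase m₀ ⊂ F := Finset.erase_ssubset (F.min'_mem hF)
          have ihe := ih (F.erase m₀) herase he
          set m₁ := (F.erase m₀).min' he with hm₁
          have hm₀m₁ : m₀ + 1 ≤ m₁ := by
            have hmem := (F.erase m₀).min'_mem he
            have : m₁ ∈ F.erase m₀ := hmem
            have h1 := (Finset.mem_erase.mp this).1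
            have h2 := F.min'_le _ (Finset.mem_of_mem_erase this)
            omega
          rw [fSum_min_split _ F hF he]
          have step1 : fSum (F.erase m₀) (fun n => v n (f n)) ∈ (c (m₀+1)).1.1 :=
            F7 (m₀+1) m₁ hm₀m₁ ihe
          exact F5 m₀ (f m₀) (hf m₀) step1
    exact ((c (F.min' hF)).2.2.1) (key F hF)

end Main2

end CSTPrf

/-- the Central Sets Theorem for infinite commutative semigroups
with countably many sequences. -/
theorem centralSetsTheorem_comm {S : Type*} [AddCommSemigroup S] [Infinite S]
    (A : Set S) (hA : CentralAdd A) (y : ℕ → ℕ → S) :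
    ∃ (a : ℕ → S) (H : ℕ → Finset ℕ),
      (∀ n : ℕ, (H n).Nonempty) ∧
      (∀ n : ℕ, ∀ s ∈ H n, ∀ u ∈ H (n + 1), s < u) ∧
      ∀ f : ℕ → ℕ, (∀ n, f n ≤ n) →
        ∀ F : Finset ℕ, F.Nonempty →
          fSum F (fun n => a n + fSum (H n) (y (f n))) ∈ A := by
  haveI : Nonempty S := inferInstance
  obtain ⟨p, hidem, hAp, hJ⟩ := CSTPrf.exists_good_idempotent hA
  exact CSTPrf.mainInduction p A y hidem hJ hAp
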